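/- arXiv:1104.0089 — 3 statements merged into one kernel-verified Lean document; each statement's English description precedes it below -/
import Mathlib

section
/- Let g : ℝ → ℝ be a C^{k+1} function and p an integer with p > k+1. Then the (k+1)-st derivative of g^p has the form d^{k+1}(g^p)/dx^{k+1}(x) = Σ_{j=1}^{k+1} [p!/(p−j)!] · g(x)^{p−j} · φ_j(x), where φ_1, …, φ_{k+1} are continuous functions of x depending only on g and its first k+1 derivatives (not on p). -/
open Real

theorem stmt_3 (k : ℕ) (g : ℝ → ℝ) (hg : ContDiff ℝ (k + 1) g) :
    ∃ φ : ℕ → ℝ → ℝ, (∀ j ∈ Finset.Icc 1 (k + 1), Continuous (φ j)) ∧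
      ∀ p : ℕ, k + 1 < p → ∀ x : ℝ,
        iteratedDeriv (k + 1) (fun t => g t ^ p) x
          = ∑ j ∈ Finset.Icc 1 (k + 1),
              (p.descFactorial j : ℝ) * g x ^ (p - j) * φ j x := by
  have hgdiff : Differentiable ℝ g := hg.differentiable (by simp)
  suffices h : ∀ m : ℕ, 1 ≤ m → m ≤ k + 1 → ∃ φ : ℕ → ℝ → ℝ,
      (∀ j ∈ Finset.Icc 1 m, ContDiff ℝ (k + 1 - m : ℕ) (φ j)) ∧
      ∀ p : ℕ, m < p → ∀ x : ℝ,
        iteratedDeriv m (fun t => g t ^ p) x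
          = ∑ j ∈ Finset.Icc 1 m, (p.descFactorial j : ℝ) * g x ^ (p - j) * φ j x by
    obtain ⟨φ, hφ, hform⟩ := h (k + 1) (by omega) le_rfl
    exact ⟨φ, fun j hj => (hφ j hj).continuous, fun p hp x => hform p hp x⟩
  intro m
  induction m with
  | zero => intro h; omega
  | succ m ih =>
    intro _ hm1
    rcases Nat.eq_zero_or_pos m with hm0 | hmpos
    · -- base case m = 0, i.e. first derivative
      subst hm0
      have hderivg : ContDiff ℝ (k : ℕ) (deriv g) := by
        have : ContDiff ℝ ((k : WithTop ℕ∞) + 1) g := by exact_mod_cast hg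
        exact (contDiff_succ_iff_deriv.mp this).2.2
      refine ⟨fun _ => deriv g, ?_, ?_⟩
      · intro j hj
        simpa using hderivg
      · intro p hp x
        have hgx : HasDerivAt g (deriv g x) x := (hgdiff x).hasDerivAt
        have hd := (hgx.fun_pow p).deriv
        simp only [iteratedDeriv_succ, iteratedDeriv_zero]
        rw [hd]
        simp [Nat.descFactorial]
    · -- inductive step
      obtain ⟨φ0, hφ0, hf0⟩ := ih hmpos (by omega)
      set φ : ℕ → ℝ → ℝ := fun j => if j ∈ Finset.Icc 1 m then φ0 j else (fun _ => (0:ℝ)) with hφdef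
      have hφall : ∀ j, ContDiff ℝ (k + 1 - m : ℕ) (φ j) := by
        intro j
        by_cases hj : j ∈ Finset.Icc 1 m
        · simp only [hφdef]
          rw [if_pos hj]
          exact hφ0 j hj
        · simp only [hφdef]
          rw [if_neg hj]
          exact contDiff_const
      have hkm : 1 ≤ k + 1 - m := by omega
      have hφdiff : ∀ j, Differentiable ℝ (φ j) := fun j =>
        (hφall j).differentiable (by exact_mod_cast Nat.one_le_iff_ne_zero.mp hkm)
      have hφ0eq : ∀ j ∈ Finset.Icc 1 m, φ j = φ0 j := by
        intro j hj
        simp only [hφdef]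
        rw [if_pos hj]
      -- new functions
      refine ⟨fun j x => deriv (φ j) x + φ (j - 1) x * deriv g x, ?_, ?_⟩
      · intro j hj
        have h1 : ContDiff ℝ (k + 1 - (m + 1) : ℕ) (deriv (φ j)) := by
          have hsucc : (k + 1 - m : ℕ) = (k + 1 - (m + 1)) + 1 := by omega
          have := hφall j
          rw [hsucc] at this
          have : ContDiff ℝ ((k + 1 - (m + 1) : ℕ) : WithTop ℕ∞) (deriv (φ j)) := by
            have h2 : ContDiff ℝ (((k + 1 - (m + 1) : ℕ) : WithTop ℕ∞) + 1) (φ j) := by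
              exact_mod_cast this
            exact (contDiff_succ_iff_deriv.mp h2).2.2
          exact_mod_cast this
        have h2 : ContDiff ℝ (k + 1 - (m + 1) : ℕ) (φ (j - 1)) :=
          (hφall (j - 1)).of_le (by exact_mod_cast Nat.le_of_lt_succ (by omega) |>.trans (le_refl _))
        have h3 : ContDiff ℝ (k + 1 - (m + 1) : ℕ) (deriv g) := by
          have : ContDiff ℝ ((k : WithTop ℕ∞) + 1) g := by exact_mod_cast hg
          exact ((contDiff_succ_iff_deriv.mp this).2.2).of_le (by exact_mod_cast (by omega : k + 1 - (m+1) ≤ k))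
        exact h1.add (h2.mul h3)
      · intro p hp x
        have hIter : iteratedDeriv m (fun t => g t ^ p)
            = fun y => ∑ j ∈ Finset.Icc 1 m, (p.descFactorial j : ℝ) * g y ^ (p - j) * φ j y := by
          funext y
          rw [hf0 p (by omega) y]
          exact Finset.sum_congr rfl (fun j hj => by rw [hφ0eq j hj])
        rw [iteratedDeriv_succ, hIter]
        -- derivative of each term
        have hterm : ∀ j ∈ Finset.Icc 1 m, HasDerivAt
            (fun y => (p.descFactorial j : ℝ) * g y ^ (p - j) * φ j y)
            ((p.descFactorial j : ℝ) * (((p - j : ℕ) : ℝ) * g x ^ (p - j - 1) * deriv g x) * φ j x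
              + (p.descFactorial j : ℝ) * g x ^ (p - j) * deriv (φ j) x) x := by
          intro j hj
          have hgx : HasDerivAt g (deriv g x) x := (hgdiff x).hasDerivAt
          have hpow := hgx.fun_pow (p - j)
          have hc := hpow.const_mul (p.descFactorial j : ℝ)
          have hφj : HasDerivAt (φ j) (deriv (φ j) x) x := (hφdiff j x).hasDerivAt
          have := hc.fun_mul hφj
          convert this using 1
        have hsum := HasDerivAt.fun_sum hterm
        rw [hsum.deriv]
        -- now algebra
        have hsplit : ∀ j : ℕ, ((p.descFactorial j : ℝ) * g x ^ (p - j) *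
            (deriv (φ j) x + φ (j - 1) x * deriv g x))
            = (p.descFactorial j : ℝ) * g x ^ (p - j) * deriv (φ j) x
              + (p.descFactorial j : ℝ) * g x ^ (p - j) * (φ (j - 1) x * deriv g x) := by
          intro j; ring
        simp only [hsplit, Finset.sum_add_distrib]
        have hA : ∑ j ∈ Finset.Icc 1 (m + 1),
            (p.descFactorial j : ℝ) * g x ^ (p - j) * deriv (φ j) x
            = ∑ j ∈ Finset.Icc 1 m,
            (p.descFactorial j : ℝ) * g x ^ (p - j) * deriv (φ j) x := by
          rw [Finset.sum_Icc_succ_top (by omega : 1 ≤ m + 1)]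
          have hz : φ (m + 1) = fun _ => (0:ℝ) := by
            simp only [hφdef]
            rw [if_neg (by simp)]
          rw [hz]
          simp
        have hB : ∑ j ∈ Finset.Icc 1 (m + 1),
            (p.descFactorial j : ℝ) * g x ^ (p - j) * (φ (j - 1) x * deriv g x)
            = ∑ j ∈ Finset.Icc 1 m,
            (p.descFactorial j : ℝ) * (((p - j : ℕ) : ℝ) * g x ^ (p - j - 1) * deriv g x) * φ j x := by
          have hshift : ∑ j ∈ Finset.Icc 1 (m + 1),
              (p.descFactorial j : ℝ) * g x ^ (p - j) * (φ (j - 1) x * deriv g x)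
              = ∑ j ∈ Finset.Icc 0 m,
              (p.descFactorial (j+1) : ℝ) * g x ^ (p - (j+1)) * (φ j x * deriv g x) := by
            rw [← Finset.map_add_right_Icc 0 m 1, Finset.sum_map]
            simp [addRightEmbedding]
          rw [hshift]
          have hIcc : Finset.Icc 0 m = insert 0 (Finset.Icc 1 m) := by
            ext j; simp; omega
          rw [hIcc, Finset.sum_insert (by simp)]
          have hφ0z : φ 0 = fun _ => (0:ℝ) := by
            simp only [hφdef]
            rw [if_neg (by simp)]
          rw [hφ0z]
          simp only [zero_mul, mul_zero, zero_add]
          refine Finset.sum_congr rfl ?_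
          intro j hj
          simp only [Finset.mem_Icc] at hj
          have hjp : j ≤ p := by omega
          have hcast : (p.descFactorial (j+1) : ℝ) = ((p - j : ℕ) : ℝ) * (p.descFactorial j : ℝ) := by
            rw [Nat.descFactorial_succ]; push_cast; ring
          have hsub : p - j - 1 = p - (j + 1) := by omega
          rw [hcast, ← hsub]
          ring
        rw [hA, hB, add_comm]
end

section
/- Let X₁, …, X_n be independent centered real random variables such that for some constant C > 0 and all i and all integers k ≥ 2, E|X_i|^k ≤ k!·C^{k−2}·E[X_i²]. Then for every ε > 0, P(|Σ_{i=1}^n X_i| > ε·√(Σ E[X_i²])) ≤ 2·exp(−ε²/(4 + 2εC/√(Σ E[X_i²]))). -/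
open MeasureTheory ProbabilityTheory

lemma real_exp_eq_tsum (x : ℝ) : Real.exp x = ∑' n : ℕ, x ^ n / n.factorial := by
  rw [Real.exp_eq_exp_ℝ, NormedSpace.exp_eq_tsum_div]

lemma integrable_of_tsum_bound {α : Type*} [MeasurableSpace α] {μ : Measure α}
    {F : ℕ → α → ℝ} (hnn : ∀ k ω, 0 ≤ F k ω) (hF_int : ∀ k, Integrable (F k) μ)
    (hsum : ∀ ω, Summable fun k => F k ω)
    {b : ℕ → ℝ} (hb : ∀ k, ∫ ω, F k ω ∂μ ≤ b k) (hbs : Summable b)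
    {g : α → ℝ} (hg : AEStronglyMeasurable g μ)
    (hgle : ∀ ω, |g ω| ≤ ∑' k, F k ω) : Integrable g μ := by
  refine ⟨hg, ?_⟩
  rw [hasFiniteIntegral_iff_norm]
  have hb0 : ∀ k, 0 ≤ b k := fun k =>
    (integral_nonneg (fun ω => hnn k ω)).trans (hb k)
  calc ∫⁻ ω, ENNReal.ofReal ‖g ω‖ ∂μ
      ≤ ∫⁻ ω, ∑' k, ENNReal.ofReal (F k ω) ∂μ := by
        refine lintegral_mono fun ω => ?_
        rw [← ENNReal.ofReal_tsum_of_nonneg (fun k => hnn k ω) (hsum ω)]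
        exact ENNReal.ofReal_le_ofReal ((Real.norm_eq_abs _).trans_le (hgle ω))
    _ = ∑' k, ∫⁻ ω, ENNReal.ofReal (F k ω) ∂μ :=
        lintegral_tsum fun k => (hF_int k).aemeasurable.ennreal_ofReal
    _ = ∑' k, ENNReal.ofReal (∫ ω, F k ω ∂μ) := by
        refine tsum_congr fun k => ?_
        rw [ofReal_integral_eq_lintegral_ofReal (hF_int k) (ae_of_all _ (hnn k))]
    _ ≤ ∑' k, ENNReal.ofReal (b k) :=
        ENNReal.tsum_le_tsum fun k => ENNReal.ofReal_le_ofReal (hb k)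
    _ = ENNReal.ofReal (∑' k, b k) := (ENNReal.ofReal_tsum_of_nonneg hb0 hbs).symm
    _ < ⊤ := ENNReal.ofReal_lt_top

lemma abs_pow_integrable {Ω : Type*} [MeasureSpace Ω] [IsProbabilityMeasure (volume : Measure Ω)]
    (Y : Ω → ℝ) (hY : Measurable Y)
    (hint : ∀ k : ℕ, 2 ≤ k → Integrable (fun ω => |Y ω| ^ k)) :
    ∀ k : ℕ, Integrable (fun ω => |Y ω| ^ k) := by
  intro k
  match k with
  | 0 => simpa using integrable_const (1 : ℝ)
  | 1 =>
    refine Integrable.mono' ((integrable_const (1:ℝ)).add (hint 2 le_rfl))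
      (hY.abs.pow_const 1).aestronglyMeasurable (ae_of_all _ fun ω => ?_)
    have h := abs_nonneg (Y ω)
    rw [Real.norm_eq_abs, abs_of_nonneg (by positivity)]
    simp only [Pi.add_apply, pow_one]
    nlinarith [sq_nonneg (|Y ω| - 1)]
  | (m+2) => exact hint (m+2) (by omega)

lemma mgf_le_exp {Ω : Type*} [MeasureSpace Ω] [IsProbabilityMeasure (volume : Measure Ω)]
    (Y : Ω → ℝ) (hY : Measurable Y) (hcen : ∫ ω, Y ω = 0)
    (hint : ∀ k : ℕ, 2 ≤ k → Integrable (fun ω => |Y ω| ^ k))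
    (C : ℝ) (hC : 0 < C)
    (hmom : ∀ k : ℕ, 2 ≤ k →
      ∫ ω, |Y ω| ^ k ≤ (k.factorial : ℝ) * C ^ (k - 2) * ∫ ω, (Y ω) ^ 2)
    (t : ℝ) (htC : |t| * C < 1) :
    Integrable (fun ω => Real.exp (t * Y ω)) ∧
      mgf Y volume t ≤ Real.exp (t ^ 2 * (∫ ω, (Y ω) ^ 2) / (1 - |t| * C)) := by
  set σ2 : ℝ := ∫ ω, (Y ω) ^ 2 with hσ2def
  have hσ2 : 0 ≤ σ2 := integral_nonneg fun ω => sq_nonneg _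
  have hAbs := abs_pow_integrable Y hY hint
  have hPow : ∀ k : ℕ, Integrable (fun ω => (Y ω) ^ k) := fun k =>
    (hAbs k).mono' ((hY.pow_const k).aestronglyMeasurable)
      (ae_of_all _ fun ω => by rw [Real.norm_eq_abs, abs_pow])
  set b : ℕ → ℝ := fun k => |t| ^ k / k.factorial * ∫ ω, |Y ω| ^ k with hbdef
  have hbnn : ∀ k, 0 ≤ b k := fun k => by
    have : 0 ≤ ∫ ω, |Y ω| ^ k := integral_nonneg fun ω => by positivity
    positivity
  -- geometric domination of b from index 2 on
  have hb2 : ∀ j : ℕ, b (j + 2) ≤ σ2 * t ^ 2 * (|t| * C) ^ j := by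
    intro j
    have hfac : (0:ℝ) < ((j+2).factorial : ℝ) := by
      exact_mod_cast Nat.factorial_pos _
    have hm := hmom (j+2) (by omega)
    have hj : (j + 2) - 2 = j := by omega
    rw [hj] at hm
    have habs : |t| ^ (j+2) = |t| ^ j * t ^ 2 := by rw [pow_add, sq_abs]
    calc b (j+2) ≤ |t| ^ (j+2) / ((j+2).factorial : ℝ)
          * (((j+2).factorial : ℝ) * C ^ j * σ2) := by
          exact mul_le_mul_of_nonneg_left hm (by positivity)
      _ = σ2 * t ^ 2 * (|t| * C) ^ j := by
          rw [habs, mul_pow]; field_simp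
  have hr0 : (0:ℝ) ≤ |t| * C := by positivity
  have hgeom : Summable (fun j : ℕ => σ2 * t ^ 2 * (|t| * C) ^ j) :=
    (summable_geometric_of_lt_one hr0 htC).mul_left _
  have hbs : Summable b := by
    refine (summable_nat_add_iff 2).mp ?_
    exact Summable.of_nonneg_of_le (fun j => hbnn _) hb2 hgeom
  -- the series terms
  set G : ℕ → Ω → ℝ := fun k ω => (t * Y ω) ^ k / k.factorial with hGdef
  have hGeq : ∀ k ω, G k ω = t ^ k / k.factorial * (Y ω) ^ k := by
    intro k ω; rw [hGdef]; simp only; rw [mul_pow]; ring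
  have hGint : ∀ k, Integrable (G k) := by
    intro k
    have := (hPow k).const_mul (t ^ k / k.factorial)
    refine this.congr (ae_of_all _ fun ω => (hGeq k ω).symm)
  have hGnorm : ∀ k ω, ‖G k ω‖ = |t| ^ k / k.factorial * |Y ω| ^ k := by
    intro k ω
    rw [hGdef]; simp only
    rw [Real.norm_eq_abs, abs_div, abs_pow, abs_mul, mul_pow,
      Nat.abs_cast]
    ring
  have hGnormint : ∀ k, ∫ ω, ‖G k ω‖ = b k := by
    intro k
    simp_rw [hGnorm]
    rw [integral_const_mul]
  have hGsum : Summable (fun k => ∫ ω, ‖G k ω‖) := by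
    simp_rw [hGnormint]; exact hbs
  -- integrability of exp
  have hFnn : ∀ (k : ℕ) (ω : Ω), 0 ≤ |t| ^ k / (k.factorial : ℝ) * |Y ω| ^ k :=
    fun k ω => by positivity
  have hFeq : ∀ (ω : Ω) (k : ℕ),
      |t| ^ k / (k.factorial : ℝ) * |Y ω| ^ k = (|t| * |Y ω|) ^ k / k.factorial := by
    intro ω k; rw [mul_pow]; ring
  have hexp_int : Integrable (fun ω => Real.exp (t * Y ω)) := by
    refine integrable_of_tsum_bound (F := fun k ω => |t| ^ k / (k.factorial : ℝ) * |Y ω| ^ k)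
      hFnn (fun k => (hAbs k).const_mul _) (fun ω => ?_) (b := b) (fun k => ?_) hbs
      ((hY.const_mul t).exp.aestronglyMeasurable) (fun ω => ?_)
    · exact (summable_congr (hFeq ω)).mpr (Real.summable_pow_div_factorial _)
    · rw [integral_const_mul]
    · rw [abs_of_pos (Real.exp_pos _)]
      calc Real.exp (t * Y ω) ≤ Real.exp (|t| * |Y ω|) := by
            apply Real.exp_le_exp.mpr
            calc t * Y ω ≤ |t * Y ω| := le_abs_self _
              _ = |t| * |Y ω| := abs_mul _ _
        _ = ∑' k : ℕ, (|t| * |Y ω|) ^ k / k.factorial := real_exp_eq_tsum _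
        _ = ∑' k : ℕ, |t| ^ k / (k.factorial : ℝ) * |Y ω| ^ k :=
            tsum_congr fun k => (hFeq ω k).symm
  refine ⟨hexp_int, ?_⟩
  -- expand the mgf as a series
  have hmgf : mgf Y volume t = ∑' k, ∫ ω, G k ω := by
    rw [mgf]
    have hptw : ∀ ω, Real.exp (t * Y ω) = ∑' k, G k ω := fun ω => real_exp_eq_tsum _
    simp_rw [hptw]
    exact (integral_tsum_of_summable_integral_norm hGint hGsum).symm
  have hIk : ∀ k, ‖∫ ω, G k ω‖ ≤ b k := fun k =>
    (norm_integral_le_integral_norm _).trans_eq (hGnormint k)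
  have hIsum : Summable (fun k => ∫ ω, G k ω) := Summable.of_norm_bounded hbs hIk
  have hsplit : ∑' k, ∫ ω, G k ω
      = (∑ k ∈ Finset.range 2, ∫ ω, G k ω) + ∑' j, ∫ ω, G (j+2) ω :=
    (Summable.sum_add_tsum_nat_add 2 hIsum).symm
  have hI0 : ∫ ω, G 0 ω = 1 := by
    simp [hGdef]
  have hI1 : ∫ ω, G 1 ω = 0 := by
    simp only [hGdef, pow_one, Nat.factorial_one, Nat.cast_one, div_one]
    rw [integral_const_mul, hcen, mul_zero]
  have htail : ∑' j, ∫ ω, G (j+2) ω ≤ σ2 * t ^ 2 * (1 - |t| * C)⁻¹ := by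
    calc ∑' j, ∫ ω, G (j+2) ω ≤ ∑' j : ℕ, σ2 * t ^ 2 * (|t| * C) ^ j := by
          refine Summable.tsum_le_tsum (fun j => ?_) ((summable_nat_add_iff 2).mpr hIsum) hgeom
          exact (le_abs_self _).trans ((hIk (j+2)).trans (hb2 j))
      _ = σ2 * t ^ 2 * (1 - |t| * C)⁻¹ := by
          rw [tsum_mul_left, tsum_geometric_of_lt_one hr0 htC]
  have hfinal : mgf Y volume t ≤ 1 + σ2 * t ^ 2 * (1 - |t| * C)⁻¹ := by
    rw [hmgf, hsplit]
    have : ∑ k ∈ Finset.range 2, ∫ ω, G k ω = 1 := by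
      simp [Finset.sum_range_succ, hI0, hI1]
    rw [this]
    linarith [htail]
  refine hfinal.trans ?_
  have := Real.add_one_le_exp (t ^ 2 * σ2 / (1 - |t| * C))
  have heq : t ^ 2 * σ2 / (1 - |t| * C) = σ2 * t ^ 2 * (1 - |t| * C)⁻¹ := by
    rw [div_eq_mul_inv]; ring
  linarith [this, heq ▸ this]

theorem stmt_4 {Ω : Type*} [MeasureSpace Ω] [IsProbabilityMeasure (volume : Measure Ω)]
    (n : ℕ) (X : Fin n → Ω → ℝ) (hmeas : ∀ i, Measurable (X i))
    (hindep : iIndepFun X volume)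
    (hcen : ∀ i, ∫ ω, X i ω = 0)
    (hint : ∀ i, ∀ k : ℕ, 2 ≤ k → Integrable (fun ω => |X i ω| ^ k))
    (C : ℝ) (hC : 0 < C)
    (hmom : ∀ i, ∀ k : ℕ, 2 ≤ k →
      ∫ ω, |X i ω| ^ k ≤ (k.factorial : ℝ) * C ^ (k - 2) * ∫ ω, (X i ω) ^ 2)
    (V : ℝ) (hV : V = ∑ i, ∫ ω, (X i ω) ^ 2) (hVpos : 0 < V) :
    ∀ ε : ℝ, 0 < ε →
      (volume {ω | ε * Real.sqrt V < |∑ i, X i ω|}).toReal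
        ≤ 2 * Real.exp (-(ε ^ 2 / (4 + 2 * ε * C / Real.sqrt V))) := by
  intro ε hε
  set s : ℝ := Real.sqrt V with hsdef
  have hs : 0 < s := Real.sqrt_pos.mpr hVpos
  have hs2 : s ^ 2 = V := Real.sq_sqrt hVpos.le
  set u : ℝ := ε * C / s with hudef
  have hu : 0 < u := by positivity
  set t : ℝ := ε / (s * (2 + u)) with htdef
  have ht : 0 < t := by positivity
  have htabs : |t| = t := abs_of_pos ht
  have hsu : s * u = ε * C := by rw [hudef]; field_simp
  have htC : |t| * C < 1 := by
    rw [htabs, htdef, div_mul_eq_mul_div, div_lt_one (by positivity)]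
    nlinarith
  have h1mtC : (0:ℝ) < 1 - t * C := by rw [← htabs]; linarith
  -- key bound for τ = t and τ = -t
  have key : ∀ τ : ℝ, |τ| = t →
      Integrable (fun ω => Real.exp (τ * ∑ i, X i ω)) ∧
      mgf (fun ω => ∑ i, X i ω) volume τ ≤ Real.exp (t ^ 2 * V / (1 - t * C)) := by
    intro τ hτ
    have hτC : |τ| * C < 1 := by rw [hτ, ← htabs]; exact htC
    have hi := fun i => mgf_le_exp (X i) (hmeas i) (hcen i) (hint i) C hC (hmom i) τ hτC
    have hfun : (fun ω => ∑ i, X i ω) = ∑ i, X i := by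
      funext ω; simp
    have hintS : Integrable (fun ω => Real.exp (τ * ∑ i, X i ω)) := by
      have := hindep.integrable_exp_mul_sum (t := τ) hmeas
        (s := Finset.univ) (fun i _ => (hi i).1)
      simpa using this
    refine ⟨hintS, ?_⟩
    have hτ2 : τ ^ 2 = t ^ 2 := by rw [← sq_abs, hτ]
    calc mgf (fun ω => ∑ i, X i ω) volume τ
        = ∏ i, mgf (X i) volume τ := by
          rw [hfun]; exact hindep.mgf_sum hmeas Finset.univ
      _ ≤ ∏ i, Real.exp (τ ^ 2 * (∫ ω, (X i ω) ^ 2) / (1 - |τ| * C)) :=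
          Finset.prod_le_prod (fun i _ => mgf_nonneg) (fun i _ => (hi i).2)
      _ = Real.exp (∑ i, τ ^ 2 * (∫ ω, (X i ω) ^ 2) / (1 - |τ| * C)) :=
          (Real.exp_sum _ _).symm
      _ = Real.exp (t ^ 2 * V / (1 - t * C)) := by
          rw [hτ, hτ2, ← Finset.sum_div, ← Finset.mul_sum, ← hV]
  obtain ⟨hint_t, hmgf_t⟩ := key t htabs
  obtain ⟨hint_nt, hmgf_nt⟩ := key (-t) (by rw [abs_neg]; exact htabs)
  set A : ℝ := ε * s with hAdef
  set E : ℝ := Real.exp (-(ε ^ 2 / (4 + 2 * ε * C / s))) with hEdef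
  have hEeq : Real.exp (-t * A) * Real.exp (t ^ 2 * V / (1 - t * C)) = E := by
    rw [← Real.exp_add, hEdef]
    congr 1
    have h2u : (0:ℝ) < 2 + u := by linarith
    have h1mtCval : 1 - t * C = 2 / (2 + u) := by
      have : t * C = u / (2 + u) := by
        rw [htdef]
        rw [div_mul_eq_mul_div, ← hsu]
        field_simp
      rw [this]; field_simp; ring
    rw [h1mtCval, hAdef, htdef, ← hs2]
    have h4 : 4 + 2 * ε * C / s = 2 * (2 + u) := by
      rw [hudef]; field_simp; ring
    rw [h4]
    field_simp
    ring
  have hupper : (volume {ω | A ≤ ∑ i, X i ω}).toReal ≤ E := by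
    refine (measure_ge_le_exp_mul_mgf A ht.le hint_t).trans ?_
    rw [← hEeq]
    exact mul_le_mul_of_nonneg_left hmgf_t (Real.exp_nonneg _)
  have hlower : (volume {ω | (∑ i, X i ω) ≤ -A}).toReal ≤ E := by
    have := measure_le_le_exp_mul_mgf (X := fun ω => ∑ i, X i ω) (μ := volume)
      (-A) (neg_nonpos.mpr ht.le) hint_nt
    refine this.trans ?_
    have hexp : Real.exp (-(-t) * -A) = Real.exp (-t * A) := by ring_nf
    rw [hexp, ← hEeq]
    exact mul_le_mul_of_nonneg_left hmgf_nt (Real.exp_nonneg _)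
  have hsub : {ω | A < |∑ i, X i ω|} ⊆
      {ω | A ≤ ∑ i, X i ω} ∪ {ω | (∑ i, X i ω) ≤ -A} := by
    intro ω hω
    simp only [Set.mem_setOf_eq] at hω
    rcases lt_abs.mp hω with h | h
    · exact Or.inl h.le
    · exact Or.inr (show (∑ i, X i ω) ≤ -A by linarith)
  have hmono : volume {ω | A < |∑ i, X i ω|} ≤
      volume {ω | A ≤ ∑ i, X i ω} + volume {ω | (∑ i, X i ω) ≤ -A} :=
    (measure_mono hsub).trans (measure_union_le _ _)
  have htoReal : (volume {ω | A < |∑ i, X i ω|}).toReal ≤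
      (volume {ω | A ≤ ∑ i, X i ω}).toReal + (volume {ω | (∑ i, X i ω) ≤ -A}).toReal := by
    rw [← ENNReal.toReal_add (measure_ne_top _ _) (measure_ne_top _ _)]
    exact ENNReal.toReal_mono
      (ENNReal.add_ne_top.mpr ⟨measure_ne_top _ _, measure_ne_top _ _⟩) hmono
  calc (volume {ω | ε * s < |∑ i, X i ω|}).toReal
      ≤ (volume {ω | A ≤ ∑ i, X i ω}).toReal
        + (volume {ω | (∑ i, X i ω) ≤ -A}).toReal := htoReal
    _ ≤ E + E := add_le_add hupper hlower
    _ = 2 * E := by ring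
end

section
/- Let g be C^{k+1} with g ≥ g_min > 0 on an interval I, p > k+1 an integer, and suppose p·h → 0. Then for u, v ∈ I with |u − v| ≤ h, the (k+1)-st derivative satisfies d^{k+1}(g^p)/dx^{k+1}(v) = d^{k+1}(g^p)/dx^{k+1}(u) + Σ_{j=1}^{k+1} [p!/(p−j)!]·g(u)^{p−j}·o(1), where the o(1) terms tend to 0 uniformly as p·h → 0. -/
open Filter Real

noncomputable def phiAux (g : ℝ → ℝ) : ℕ → ℕ → ℝ → ℝ
  | 0, 0 => fun _ => 1
  | 0, _+1 => fun _ => 0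
  | m+1, 0 => deriv (phiAux g m 0)
  | m+1, j+1 => fun x => deriv (phiAux g m (j+1)) x + deriv g x * phiAux g m j x

lemma phiAux_of_lt (g : ℝ → ℝ) : ∀ m j : ℕ, m < j → phiAux g m j = fun _ => 0
  | 0, _+1, _ => rfl
  | m+1, j+1, hm => by
    have h1 : phiAux g m (j+1) = fun _ => 0 :=
      phiAux_of_lt g m (j+1) (Nat.lt_succ_of_lt (Nat.succ_lt_succ_iff.mp hm))
    have h2 : phiAux g m j = fun _ => 0 := phiAux_of_lt g m j (Nat.succ_lt_succ_iff.mp hm)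
    show (fun x => deriv (phiAux g m (j+1)) x + deriv g x * phiAux g m j x) = fun _ => 0
    funext x
    rw [h1, h2]
    simp

lemma phiAux_zero (g : ℝ → ℝ) : ∀ m : ℕ, phiAux g (m+1) 0 = fun _ => 0
  | 0 => by
    show deriv (phiAux g 0 0) = fun _ => 0
    show deriv (fun _ : ℝ => (1:ℝ)) = fun _ => 0
    funext x; simp
  | m+1 => by
    show deriv (phiAux g (m+1) 0) = fun _ => 0
    rw [phiAux_zero g m]
    funext x; simp

lemma phiAux_contDiff {k : ℕ} {g : ℝ → ℝ} (hg : ContDiff ℝ (k+1 : ℕ) g) :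
    ∀ m : ℕ, m ≤ k + 1 → ∀ j : ℕ, ContDiff ℝ ((k + 1 - m : ℕ) : ℕ) (phiAux g m j) := by
  intro m
  induction m with
  | zero =>
    intro _ j
    match j with
    | 0 => exact contDiff_const
    | j+1 => exact contDiff_const
  | succ m ih =>
    intro hm j
    have hm' : m ≤ k + 1 := Nat.le_of_succ_le hm
    have key : ∀ j', ContDiff ℝ (((k + 1 - (m+1) : ℕ) : WithTop ℕ∞) + 1) (phiAux g m j') := by
      intro j'
      have h0 := ih hm' j'
      have hsucc : ((k + 1 - m : ℕ) : WithTop ℕ∞) = ((k + 1 - (m+1) : ℕ) : WithTop ℕ∞) + 1 := by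
        have : (k + 1 - m : ℕ) = (k + 1 - (m+1)) + 1 := by omega
        rw [this]; push_cast; ring
      rw [hsucc] at h0
      exact h0
    have hderiv : ∀ j', ContDiff ℝ ((k + 1 - (m+1) : ℕ)) (deriv (phiAux g m j')) :=
      fun j' => (contDiff_succ_iff_deriv.mp (key j')).2.2
    have hg' : ContDiff ℝ ((k + 1 - (m+1) : ℕ)) (deriv g) := by
      have h1 : ContDiff ℝ ((k : ℕ) : WithTop ℕ∞) (deriv g) := by
        have hg2 : ContDiff ℝ (((k : ℕ) : WithTop ℕ∞) + 1) g := by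
          have : ((k + 1 : ℕ) : WithTop ℕ∞) = ((k : ℕ) : WithTop ℕ∞) + 1 := by push_cast; ring
          rw [← this]; exact hg
        exact (contDiff_succ_iff_deriv.mp hg2).2.2
      exact h1.of_le (Nat.cast_le.mpr (by omega))
    match j with
    | 0 => exact hderiv 0
    | j+1 =>
      show ContDiff ℝ ((k + 1 - (m+1) : ℕ)) fun x =>
        deriv (phiAux g m (j+1)) x + deriv g x * phiAux g m j x
      have hphi : ContDiff ℝ ((k + 1 - (m+1) : ℕ)) (phiAux g m j) :=
        (key j).of_le le_self_add
      exact (hderiv (j+1)).add (hg'.mul hphi)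

lemma phiAux_rep {k : ℕ} {g : ℝ → ℝ} (hg : ContDiff ℝ (k+1 : ℕ) g) {p : ℕ} (hp : k + 1 < p) :
    ∀ m : ℕ, m ≤ k + 1 → ∀ x : ℝ, iteratedDeriv m (fun t => g t ^ p) x
      = ∑ j ∈ Finset.range (k+2), (p.descFactorial j : ℝ) * g x ^ (p - j) * phiAux g m j x := by
  intro m
  induction m with
  | zero =>
    intro _ x
    rw [iteratedDeriv_zero]
    rw [Finset.sum_eq_single_of_mem 0 (Finset.mem_range.mpr (by omega))]
    · simp [phiAux]
    · intro j _ hj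
      rw [phiAux_of_lt g 0 j (Nat.pos_of_ne_zero hj)]
      simp
  | succ m ih =>
    intro hm x
    have hg_diff : Differentiable ℝ g :=
      hg.differentiable (by exact_mod_cast Nat.succ_ne_zero k)
    have hphi_diff : ∀ j, Differentiable ℝ (phiAux g m j) := by
      intro j
      exact (phiAux_contDiff hg m (by omega) j).differentiable
        (by exact_mod_cast (show k + 1 - m ≠ 0 by omega))
    rw [iteratedDeriv_succ]
    have hfun : iteratedDeriv m (fun t => g t ^ p)
        = fun y => ∑ j ∈ Finset.range (k+2),
            (p.descFactorial j : ℝ) * g y ^ (p - j) * phiAux g m j y := funext (ih (by omega))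
    rw [hfun]
    have hD : HasDerivAt (fun y => ∑ j ∈ Finset.range (k+2),
        (p.descFactorial j : ℝ) * g y ^ (p - j) * phiAux g m j y)
        (∑ j ∈ Finset.range (k+2),
          ((p.descFactorial j : ℝ) * (((p - j : ℕ) : ℝ) * g x ^ (p - j - 1) * deriv g x)
              * phiAux g m j x
            + (p.descFactorial j : ℝ) * g x ^ (p - j) * deriv (phiAux g m j) x)) x := by
      apply HasDerivAt.fun_sum
      intro j _
      have h1 := ((hg_diff x).hasDerivAt.fun_pow (p - j)).const_mul ((p.descFactorial j : ℝ))
      have h2 := h1.fun_mul ((hphi_diff j x).hasDerivAt)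
      convert h2 using 1
    rw [hD.deriv, Finset.sum_add_distrib]
    rw [Finset.sum_range_succ'
      (fun j => (p.descFactorial j : ℝ) * g x ^ (p - j) * phiAux g (m+1) j x) (k+1)]
    rw [Finset.sum_range_succ
      (fun j => (p.descFactorial j : ℝ) * (((p - j : ℕ):ℝ) * g x ^ (p - j - 1) * deriv g x)
        * phiAux g m j x) (k+1)]
    rw [Finset.sum_range_succ'
      (fun j => (p.descFactorial j : ℝ) * g x ^ (p - j) * deriv (phiAux g m j) x) (k+1)]
    rw [phiAux_of_lt g m (k+1) (by omega)]
    have hterm : ∀ j ∈ Finset.range (k+1),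
        (p.descFactorial (j+1) : ℝ) * g x ^ (p - (j+1)) * phiAux g (m+1) (j+1) x
        = (p.descFactorial j : ℝ) * (((p - j : ℕ):ℝ) * g x ^ (p - j - 1) * deriv g x)
            * phiAux g m j x
          + (p.descFactorial (j+1) : ℝ) * g x ^ (p - (j+1)) * deriv (phiAux g m (j+1)) x := by
      intro j _
      have h1 : phiAux g (m+1) (j+1) x
          = deriv (phiAux g m (j+1)) x + deriv g x * phiAux g m j x := rfl
      have h2 : (p.descFactorial (j+1) : ℝ) = ((p - j : ℕ):ℝ) * (p.descFactorial j : ℝ) := by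
        rw [Nat.descFactorial_succ]; push_cast; ring
      have h3 : p - j - 1 = p - (j+1) := by omega
      rw [h1, h2, h3]
      ring
    rw [Finset.sum_congr rfl hterm, Finset.sum_add_distrib]
    have h0 : phiAux g (m+1) 0 x = deriv (phiAux g m 0) x := rfl
    rw [h0]
    simp only [mul_zero, add_zero, show ∀ y:ℝ, (fun _:ℝ => (0:ℝ)) y = 0 from fun _ => rfl]
    ring

lemma sum_Icc_one (f : ℕ → ℝ) (n : ℕ) :
    ∑ j ∈ Finset.Icc 1 n, f j = ∑ j ∈ Finset.range n, f (j+1) := by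
  rw [← Finset.Ico_add_one_right_eq_Icc, Finset.sum_Ico_eq_sum_range]
  exact Finset.sum_congr (by norm_num) fun i _ => by rw [add_comm]

theorem stmt_8 (k : ℕ) (g : ℝ → ℝ) (hg : ContDiff ℝ (k + 1) g)
    (g_min : ℝ) (hmin : 0 < g_min) (hbelow : ∀ t, g_min ≤ g t)
    (a b : ℝ) (hab : a < b)
    (p : ℕ → ℕ) (h : ℕ → ℝ) (hh_pos : ∀ n, 0 < h n)
    (hp_large : ∀ n, k + 1 < p n)
    (hph : Tendsto (fun n => (p n : ℝ) * h n) atTop (nhds 0)) :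
    ∃ ε : ℕ → ℝ, Tendsto ε atTop (nhds 0) ∧
      ∀ n, ∀ u ∈ Set.Icc a b, ∀ v ∈ Set.Icc a b, |u - v| ≤ h n →
        |iteratedDeriv (k + 1) (fun t => g t ^ p n) v
            - iteratedDeriv (k + 1) (fun t => g t ^ p n) u|
          ≤ ε n * ∑ j ∈ Finset.Icc 1 (k + 1),
              ((p n).descFactorial j : ℝ) * g u ^ (p n - j) := by
  have hg' : ContDiff ℝ ((k+1 : ℕ)) g := by exact_mod_cast hg
  have hgpos : ∀ t, 0 < g t := fun t => lt_of_lt_of_le hmin (hbelow t)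
  set φ : ℕ → ℝ → ℝ := fun j => phiAux g (k+1) j with hφdef
  have hφc : ∀ j, Continuous (φ j) := fun j =>
    (phiAux_contDiff hg' (k+1) le_rfl j).continuous
  -- representation
  have hrep : ∀ n x, iteratedDeriv (k+1) (fun t => g t ^ p n) x
      = ∑ j ∈ Finset.Icc 1 (k+1),
          ((p n).descFactorial j : ℝ) * g x ^ (p n - j) * φ j x := by
    intro n x
    rw [phiAux_rep hg' (hp_large n) (k+1) le_rfl x,
      Finset.sum_range_succ' (fun j =>
        ((p n).descFactorial j : ℝ) * g x ^ (p n - j) * phiAux g (k+1) j x) (k+1),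
      sum_Icc_one (fun j => ((p n).descFactorial j : ℝ) * g x ^ (p n - j) * φ j x) (k+1)]
    have : phiAux g (k+1) 0 = fun _ => 0 := phiAux_zero g k
    rw [this]
    simp [hφdef]
  -- the S function
  set S : ℕ → ℝ → ℝ := fun n u => ∑ j ∈ Finset.Icc 1 (k+1),
      ((p n).descFactorial j : ℝ) * g u ^ (p n - j) with hSdef
  have hS : ∀ n u, 0 < S n u := by
    intro n u
    apply Finset.sum_pos
    · intro j hj
      have hj' : j ≤ k + 1 := (Finset.mem_Icc.mp hj).2
      have hd : 0 < (p n).descFactorial j := by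
        rcases Nat.eq_zero_or_pos ((p n).descFactorial j) with h0 | h0
        · exact absurd (Nat.descFactorial_eq_zero_iff_lt.mp h0) (by have := hp_large n; omega)
        · exact h0
      exact mul_pos (by exact_mod_cast hd) (pow_pos (hgpos u) _)
    · exact ⟨1, Finset.mem_Icc.mpr ⟨le_rfl, by omega⟩⟩
  -- continuity of the iterated derivative
  have hDc : ∀ n, Continuous (iteratedDeriv (k+1) (fun t => g t ^ p n)) := by
    intro n
    have : iteratedDeriv (k+1) (fun t => g t ^ p n)
        = fun x => ∑ j ∈ Finset.Icc 1 (k+1),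
            ((p n).descFactorial j : ℝ) * g x ^ (p n - j) * φ j x := funext (hrep n)
    rw [this]
    exact continuous_finset_sum _ fun j _ =>
      ((continuous_const.mul (hg.continuous.pow _)).mul (hφc j))
  have hSc : ∀ n, Continuous (S n) := by
    intro n
    exact continuous_finset_sum _ fun j _ => (continuous_const.mul (hg.continuous.pow _))
  -- compact sets
  set Kset : ℕ → Set (ℝ × ℝ) := fun n =>
    (Set.Icc a b ×ˢ Set.Icc a b) ∩ {q : ℝ × ℝ | |q.1 - q.2| ≤ h n} with hKdef
  have hKcompact : ∀ n, IsCompact (Kset n) :=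
    fun n => (isCompact_Icc.prod isCompact_Icc).inter_right
      (isClosed_le ((continuous_fst.sub continuous_snd).abs) continuous_const)
  have haK : ∀ n, (a, a) ∈ Kset n := by
    intro n
    refine ⟨⟨⟨le_rfl, hab.le⟩, ⟨le_rfl, hab.le⟩⟩, ?_⟩
    simp [(hh_pos n).le]
  set F : ℕ → ℝ × ℝ → ℝ := fun n q =>
    |iteratedDeriv (k+1) (fun t => g t ^ p n) q.2
      - iteratedDeriv (k+1) (fun t => g t ^ p n) q.1| / S n q.1 with hFdef
  have hFc : ∀ n, Continuous (F n) := by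
    intro n
    apply Continuous.div
    · exact (((hDc n).comp continuous_snd).sub ((hDc n).comp continuous_fst)).abs
    · exact (hSc n).comp continuous_fst
    · exact fun q => (hS n q.1).ne'
  set ε : ℕ → ℝ := fun n => sSup (F n '' Kset n) with hεdef
  have hbdd : ∀ n, BddAbove (F n '' Kset n) :=
    fun n => (hKcompact n).bddAbove_image (hFc n).continuousOn
  have hεnonneg : ∀ n, 0 ≤ ε n := by
    intro n
    have : F n (a, a) = 0 := by simp [hFdef]
    rw [← this]
    exact le_csSup (hbdd n) ⟨(a, a), haK n, rfl⟩
  refine ⟨ε, ?_, ?_⟩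
  · -- the tendsto part: core estimate
    have hg_diff : Differentiable ℝ g :=
      hg'.differentiable (by exact_mod_cast Nat.succ_ne_zero k)
    have hderivgc : Continuous (deriv g) := by
      have hg2 : ContDiff ℝ (((k : ℕ) : WithTop ℕ∞) + 1) g := by
        have hcast : ((k + 1 : ℕ) : WithTop ℕ∞) = ((k : ℕ) : WithTop ℕ∞) + 1 := by
          push_cast; ring
        rw [← hcast]; exact hg'
      exact ((contDiff_succ_iff_deriv.mp hg2).2.2).continuous
    obtain ⟨L0, hL0⟩ := isCompact_Icc.exists_bound_of_continuousOn
      (hderivgc.continuousOn : ContinuousOn (deriv g) (Set.Icc a b))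
    set L := max L0 0 with hLdef
    have hL : ∀ x ∈ Set.Icc a b, |deriv g x| ≤ L := fun x hx =>
      le_trans (by simpa using hL0 x hx) (le_max_left _ _)
    have hLnn : (0:ℝ) ≤ L := le_max_right _ _
    have hLip : ∀ u ∈ Set.Icc a b, ∀ v ∈ Set.Icc a b, |g v - g u| ≤ L * |v - u| := by
      intro u hu v hv
      have := Convex.norm_image_sub_le_of_norm_deriv_le
        (fun x _ => (hg_diff x)) (fun x hx => by simpa using hL x hx)
        (convex_Icc a b) hu hv
      simpa [Real.norm_eq_abs] using this
    set c := L / g_min with hcdef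
    have hcnn : (0:ℝ) ≤ c := div_nonneg hLnn hmin.le
    obtain ⟨M0, hM0⟩ := isCompact_Icc.exists_bound_of_continuousOn
      ((continuous_finset_sum (Finset.Icc 1 (k+1)) (fun j _ => (hφc j).abs)).continuousOn :
        ContinuousOn (fun x => ∑ j ∈ Finset.Icc 1 (k+1), |φ j x|) (Set.Icc a b))
    set M := max M0 1 with hMdef
    have hMpos : (0:ℝ) < M := lt_of_lt_of_le one_pos (le_max_right _ _)
    have hM : ∀ j ∈ Finset.Icc 1 (k+1), ∀ x ∈ Set.Icc a b, |φ j x| ≤ M := by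
      intro j hj x hx
      have h1 : |φ j x| ≤ ∑ j' ∈ Finset.Icc 1 (k+1), |φ j' x| :=
        Finset.single_le_sum (f := fun j' => |φ j' x|) (fun i _ => abs_nonneg _) hj
      have h2 : ∑ j' ∈ Finset.Icc 1 (k+1), |φ j' x| ≤ M0 :=
        le_trans (le_abs_self _) (hM0 x hx)
      exact le_trans (le_trans h1 h2) (le_max_left _ _)
    set Θ : ℝ × ℝ → ℝ := fun q => ∑ j ∈ Finset.Icc 1 (k+1), |φ j q.2 - φ j q.1| with hΘdef
    have hΘc : Continuous Θ :=
      continuous_finset_sum _ fun j _ =>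
        (((hφc j).comp continuous_snd).sub ((hφc j).comp continuous_fst)).abs
    have hΘnn : ∀ q, 0 ≤ Θ q := fun q => Finset.sum_nonneg fun j _ => abs_nonneg _
    rw [Metric.tendsto_atTop]
    intro δ hδ
    have hUC : UniformContinuousOn Θ (Set.Icc a b ×ˢ Set.Icc a b) :=
      (isCompact_Icc.prod isCompact_Icc).uniformContinuousOn_of_continuous hΘc.continuousOn
    rw [Metric.uniformContinuousOn_iff] at hUC
    obtain ⟨η, hηpos, hη⟩ := hUC (δ/4) (by linarith)
    have hΘsmall : ∀ u ∈ Set.Icc a b, ∀ v ∈ Set.Icc a b, |u - v| < η → Θ (u, v) ≤ δ/4 := by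
      intro u hu v hv huv
      have hmem1 : ((u, u) : ℝ × ℝ) ∈ Set.Icc a b ×ˢ Set.Icc a b := ⟨hu, hu⟩
      have hmem2 : ((u, v) : ℝ × ℝ) ∈ Set.Icc a b ×ˢ Set.Icc a b := ⟨hu, hv⟩
      have hdist : dist ((u,u) : ℝ × ℝ) ((u, v) : ℝ × ℝ) < η := by
        rw [Prod.dist_eq]
        have e1 : dist u u = 0 := dist_self u
        have e2 : dist u v = |u - v| := Real.dist_eq u v
        rw [e1, e2]
        exact max_lt hηpos huv
      have h3 := hη (u, u) hmem1 (u, v) hmem2 hdist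
      have hΘuu : Θ (u, u) = 0 := by simp [hΘdef]
      rw [Real.dist_eq, hΘuu, zero_sub, abs_neg, abs_of_nonneg (hΘnn _)] at h3
      linarith
    have hp1 : ∀ n, (1:ℝ) ≤ (p n : ℝ) := fun n => by
      exact_mod_cast Nat.one_le_iff_ne_zero.mpr (by have := hp_large n; omega)
    have hhn : Tendsto h atTop (nhds 0) := by
      apply tendsto_of_tendsto_of_tendsto_of_le_of_le tendsto_const_nhds hph
      · exact fun n => (hh_pos n).le
      · exact fun n => le_mul_of_one_le_left (hh_pos n).le (hp1 n)
    have Ev1 : ∀ᶠ n in atTop, h n < η := hhn.eventually_lt_const hηpos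
    have hexp : Tendsto (fun n => M * (Real.exp (c * ((p n : ℝ) * h n)) - 1)) atTop (nhds 0) := by
      have h1 : Tendsto (fun n => c * ((p n : ℝ) * h n)) atTop (nhds 0) := by
        simpa using hph.const_mul c
      have h2 : Tendsto (fun n => Real.exp (c * ((p n : ℝ) * h n)) - 1) atTop (nhds 0) := by
        have h3 := (Real.continuous_exp.tendsto 0).comp h1
        have h4 := h3.sub_const 1
        simpa using h4
      simpa using h2.const_mul M
    have Ev2 : ∀ᶠ n in atTop, M * (Real.exp (c * ((p n : ℝ) * h n)) - 1) < δ/4 :=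
      hexp.eventually_lt_const (by linarith)
    have core : ∀ᶠ n in atTop, ∀ u ∈ Set.Icc a b, ∀ v ∈ Set.Icc a b, |u - v| ≤ h n →
        |iteratedDeriv (k+1) (fun t => g t ^ p n) v
          - iteratedDeriv (k+1) (fun t => g t ^ p n) u| ≤ (δ/2) * S n u := by
      filter_upwards [Ev1, Ev2] with n h1 h2
      intro u hu v hv huv
      set t := c * ((p n : ℝ) * h n) with htdef
      have hgu : 0 < g u := hgpos u
      have hgv : 0 < g v := hgpos v
      set r := g v / g u with hrdef
      have hrpos : 0 < r := div_pos hgv hgu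
      have hch : (0:ℝ) ≤ c * h n := mul_nonneg hcnn (hh_pos n).le
      have hbound : ∀ w ∈ Set.Icc a b, ∀ w' ∈ Set.Icc a b, |w - w'| ≤ h n →
          g w ≤ g w' * Real.exp (c * h n) := by
        intro w hw w' hw' hww'
        have h3 : g w - g w' ≤ L * |w - w'| :=
          le_trans (le_abs_self _) (by simpa [abs_sub_comm] using hLip w' hw' w hw)
        have h4 : L * |w - w'| ≤ L * h n := mul_le_mul_of_nonneg_left hww' hLnn
        have h5 : L * h n = g_min * (c * h n) := by
          rw [hcdef]; field_simp
        have h6 : g_min * (c * h n) ≤ g w' * (c * h n) :=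
          mul_le_mul_of_nonneg_right (hbelow w') hch
        have h7 : g w ≤ g w' * (1 + c * h n) := by nlinarith
        have h8 : (1 : ℝ) + c * h n ≤ Real.exp (c * h n) := by
          have := Real.add_one_le_exp (c * h n); linarith
        calc g w ≤ g w' * (1 + c * h n) := h7
          _ ≤ g w' * Real.exp (c * h n) :=
              mul_le_mul_of_nonneg_left h8 (hgpos w').le
      have hvu : |v - u| ≤ h n := by rwa [abs_sub_comm]
      have hr_up : r ≤ Real.exp (c * h n) := by
        rw [hrdef, div_le_iff₀ hgu]
        calc g v ≤ g u * Real.exp (c * h n) := hbound v hv u hu hvu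
          _ = Real.exp (c * h n) * g u := mul_comm _ _
      have hr_lo : Real.exp (-(c * h n)) ≤ r := by
        have h3 : g u ≤ g v * Real.exp (c * h n) := hbound u hu v hv huv
        rw [hrdef, le_div_iff₀ hgu]
        have h4 := mul_le_mul_of_nonneg_left h3 (Real.exp_pos (-(c * h n))).le
        calc Real.exp (-(c * h n)) * g u
            ≤ Real.exp (-(c * h n)) * (g v * Real.exp (c * h n)) := h4
          _ = g v * (Real.exp (-(c * h n)) * Real.exp (c * h n)) := by ring
          _ = g v := by rw [← Real.exp_add]; simp
      have het : ∀ e : ℕ, e ≤ p n → ((e:ℝ)) * (c * h n) ≤ t := by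
        intro e he
        have h3 : ((e:ℝ)) ≤ (p n : ℝ) := by exact_mod_cast he
        calc (e:ℝ) * (c * h n) ≤ (p n : ℝ) * (c * h n) :=
            mul_le_mul_of_nonneg_right h3 hch
          _ = t := by rw [htdef]; ring
      have hpow_up : ∀ e : ℕ, e ≤ p n → r ^ e ≤ Real.exp t := by
        intro e he
        calc r ^ e ≤ Real.exp (c * h n) ^ e := pow_le_pow_left₀ hrpos.le hr_up e
          _ = Real.exp ((e : ℝ) * (c * h n)) := (Real.exp_nat_mul _ e).symm
          _ ≤ Real.exp t := Real.exp_le_exp.mpr (het e he)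
      have hpow_lo : ∀ e : ℕ, e ≤ p n → Real.exp (-t) ≤ r ^ e := by
        intro e he
        calc Real.exp (-t) ≤ Real.exp (-((e:ℝ) * (c * h n))) :=
            Real.exp_le_exp.mpr (by linarith [het e he])
          _ = Real.exp (-(c * h n)) ^ e := by
              rw [← Real.exp_nat_mul]; congr 1; ring
          _ ≤ r ^ e := pow_le_pow_left₀ (Real.exp_pos _).le hr_lo e
      have hexp1 : Real.exp t * Real.exp (-t) = 1 := by
        rw [← Real.exp_add]; simp
      have hexp2 : (2:ℝ) ≤ Real.exp t + Real.exp (-t) := by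
        nlinarith [Real.exp_pos t, sq_nonneg (Real.exp t - 1)]
      have habs : ∀ e : ℕ, e ≤ p n → |r ^ e - 1| ≤ Real.exp t - 1 := by
        intro e he
        rw [abs_le]
        constructor
        · have := hpow_lo e he; linarith
        · have := hpow_up e he; linarith
      have hterm : ∀ j ∈ Finset.Icc 1 (k+1),
          |((p n).descFactorial j : ℝ) * g v ^ (p n - j) * φ j v
            - ((p n).descFactorial j : ℝ) * g u ^ (p n - j) * φ j u|
          ≤ (δ/2) * (((p n).descFactorial j : ℝ) * g u ^ (p n - j)) := by
        intro j hj
        have hje : p n - j ≤ p n := Nat.sub_le _ _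
        have hgveq : g v ^ (p n - j) = r ^ (p n - j) * g u ^ (p n - j) := by
          rw [hrdef, div_pow]
          field_simp
        have hE : |r ^ (p n - j) * φ j v - φ j u| ≤ δ/2 := by
          have e1 : |φ j v - φ j u| ≤ δ/4 := by
            have h5 : |φ j v - φ j u| ≤ Θ (u, v) :=
              Finset.single_le_sum (f := fun j' => |φ j' v - φ j' u|)
                (fun i _ => abs_nonneg _) hj
            exact le_trans h5 (hΘsmall u hu v hv (lt_of_le_of_lt huv h1))
          have e2 : |φ j v| * |r ^ (p n - j) - 1| ≤ M * (Real.exp t - 1) :=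
            mul_le_mul (hM j hj v hv) (habs _ hje) (abs_nonneg _) hMpos.le
          have e3 : r ^ (p n - j) * φ j v - φ j u
              = (φ j v - φ j u) + φ j v * (r ^ (p n - j) - 1) := by ring
          calc |r ^ (p n - j) * φ j v - φ j u|
              ≤ |φ j v - φ j u| + |φ j v * (r ^ (p n - j) - 1)| := by
                rw [e3]; exact abs_add_le _ _
            _ ≤ δ/4 + M * (Real.exp t - 1) := by
                rw [abs_mul]; exact add_le_add e1 e2
            _ ≤ δ/4 + δ/4 := by linarith
            _ = δ/2 := by ring
        have heq : ((p n).descFactorial j : ℝ) * g v ^ (p n - j) * φ j v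
            - ((p n).descFactorial j : ℝ) * g u ^ (p n - j) * φ j u
            = (((p n).descFactorial j : ℝ) * g u ^ (p n - j))
              * (r ^ (p n - j) * φ j v - φ j u) := by
          rw [hgveq]; ring
        have hnn : (0:ℝ) ≤ ((p n).descFactorial j : ℝ) * g u ^ (p n - j) :=
          mul_nonneg (Nat.cast_nonneg _) (pow_pos hgu _).le
        calc |((p n).descFactorial j : ℝ) * g v ^ (p n - j) * φ j v
            - ((p n).descFactorial j : ℝ) * g u ^ (p n - j) * φ j u|
            = (((p n).descFactorial j : ℝ) * g u ^ (p n - j))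
              * |r ^ (p n - j) * φ j v - φ j u| := by
              rw [heq, abs_mul, abs_of_nonneg hnn]
          _ ≤ (((p n).descFactorial j : ℝ) * g u ^ (p n - j)) * (δ/2) :=
              mul_le_mul_of_nonneg_left hE hnn
          _ = (δ/2) * (((p n).descFactorial j : ℝ) * g u ^ (p n - j)) := by ring
      rw [hrep n v, hrep n u, ← Finset.sum_sub_distrib]
      calc |∑ j ∈ Finset.Icc 1 (k+1),
            (((p n).descFactorial j : ℝ) * g v ^ (p n - j) * φ j v
              - ((p n).descFactorial j : ℝ) * g u ^ (p n - j) * φ j u)|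
          ≤ ∑ j ∈ Finset.Icc 1 (k+1),
            |((p n).descFactorial j : ℝ) * g v ^ (p n - j) * φ j v
              - ((p n).descFactorial j : ℝ) * g u ^ (p n - j) * φ j u| :=
            Finset.abs_sum_le_sum_abs _ _
        _ ≤ ∑ j ∈ Finset.Icc 1 (k+1),
            (δ/2) * (((p n).descFactorial j : ℝ) * g u ^ (p n - j)) :=
            Finset.sum_le_sum hterm
        _ = (δ/2) * S n u := by
            rw [hSdef, ← Finset.mul_sum]
    have hev : ∀ᶠ n in atTop, ε n ≤ δ/2 := by
      filter_upwards [core] with n hn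
      have hne : (F n '' Kset n).Nonempty := ⟨F n (a,a), ⟨(a,a), haK n, rfl⟩⟩
      apply csSup_le hne
      rintro x ⟨q, hq, rfl⟩
      obtain ⟨⟨hq1, hq2⟩, hq3⟩ := hq
      have h4 := hn q.1 hq1 q.2 hq2 hq3
      show |iteratedDeriv (k+1) (fun t => g t ^ p n) q.2
        - iteratedDeriv (k+1) (fun t => g t ^ p n) q.1| / S n q.1 ≤ δ/2
      rw [div_le_iff₀ (hS n q.1)]
      calc |iteratedDeriv (k+1) (fun t => g t ^ p n) q.2
          - iteratedDeriv (k+1) (fun t => g t ^ p n) q.1| ≤ (δ/2) * S n q.1 := h4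
        _ = δ/2 * S n q.1 := rfl
    obtain ⟨N, hN⟩ := Filter.eventually_atTop.mp hev
    refine ⟨N, fun n hn => ?_⟩
    have h5 := hN n hn
    have h6 := hεnonneg n
    rw [Real.dist_eq, sub_zero, abs_of_nonneg h6]
    linarith
  · intro n u hu v hv huv
    have hmem : (u, v) ∈ Kset n := ⟨⟨hu, hv⟩, huv⟩
    have hle : F n (u, v) ≤ ε n := le_csSup (hbdd n) ⟨(u, v), hmem, rfl⟩
    have h2 : |iteratedDeriv (k + 1) (fun t => g t ^ p n) v
        - iteratedDeriv (k + 1) (fun t => g t ^ p n) u| ≤ ε n * S n u := by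
      have := (div_le_iff₀ (hS n u)).mp hle
      simpa [mul_comm] using this
    exact h2
end
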